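/- Let $N_1$, $N_2$ be norms on $\mathbb{C}^{n_1}$, $\mathbb{C}^{n_2}$ respectively, $a_1,a_2>0$, and define the norm $N(z^1,z^2)=a_1N_1(z^1)+a_2N_2(z^2)$ on $\mathbb{C}^{n_1}\times\mathbb{C}^{n_2}$. For multi-indices $\alpha^1\in\mathbb{N}^{n_1}$, $\alpha^2\in\mathbb{N}^{n_2}$ with $\alpha=(\alpha^1,\alpha^2)$, let $\delta_N(\alpha)=\max\{|z^\alpha| : N(z)\le 1\}$. Then $\delta_N(\alpha) = \frac{|\alpha^1|^{|\alpha^1|}\,|\alpha^2|^{|\alpha^2|}}{|\alpha|^{|\alpha|}}\cdot\frac{\delta_{N_1}(\alpha^1)\,\delta_{N_2}(\alpha^2)}{a_1^{|\alpha^1|}a_2^{|\alpha^2|}}$ (with the convention $0^0=1$). -/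

import Mathlib

def NormSyn (E : Type*) := E

instance {E : Type*} [AddCommGroup E] : AddCommGroup (NormSyn E) :=
  inferInstanceAs (AddCommGroup E)

instance {E : Type*} [AddCommGroup E] [Module ℂ E] : Module ℂ (NormSyn E) :=
  inferInstanceAs (Module ℂ E)

lemma N_nonneg' {E : Type*} [AddCommGroup E] [Module ℂ E] (N : E → ℝ)
    (hadd : ∀ x y, N (x + y) ≤ N x + N y)
    (hsmul : ∀ (c : ℂ) (x), N (c • x) = ‖c‖ * N x) (x : E) : 0 ≤ N x := by
  have h0 : N 0 = 0 := by simpa using hsmul 0 0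
  have hneg : N (-x) = N x := by simpa using hsmul (-1) x
  have h := hadd x (-x)
  simp only [add_neg_cancel, h0, hneg] at h
  linarith

lemma sup_attained {E : Type*} [NormedAddCommGroup E] [NormedSpace ℂ E]
    [FiniteDimensional ℂ E]
    (N : E → ℝ)
    (hadd : ∀ x y, N (x + y) ≤ N x + N y)
    (hsmul : ∀ (c : ℂ) (x), N (c • x) = ‖c‖ * N x)
    (hdef : ∀ x, N x = 0 → x = 0)
    (f : E → ℝ) (hf : Continuous f) :
    ∃ z, N z ≤ 1 ∧ (∀ w, N w ≤ 1 → f w ≤ f z) ∧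
      sSup (f '' {x | N x ≤ 1}) = f z := by
  have hN0 : N 0 = 0 := by simpa using hsmul 0 0
  letI : NormedAddCommGroup (NormSyn E) := AddGroupNorm.toNormedAddCommGroup
    { toFun := N
      map_zero' := hN0
      add_le' := hadd
      neg' := fun x => by have := hsmul (-1) (show E from x); rw [neg_one_smul, norm_neg, norm_one, one_mul] at this; exact this
      eq_zero_of_map_eq_zero' := fun x hx => hdef x hx }
  letI : NormedSpace ℂ (NormSyn E) := ⟨fun c x => le_of_eq (hsmul c x)⟩
  haveI : FiniteDimensional ℂ (NormSyn E) := inferInstanceAs (FiniteDimensional ℂ E)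
  let φ : E →ₗ[ℂ] NormSyn E :=
    { toFun := fun x => x, map_add' := fun _ _ => rfl, map_smul' := fun _ _ => rfl }
  let ψ : NormSyn E →ₗ[ℂ] E :=
    { toFun := fun x => x, map_add' := fun _ _ => rfl, map_smul' := fun _ _ => rfl }
  have hφ : Continuous φ := φ.continuous_of_finiteDimensional
  have hψ : Continuous ψ := ψ.continuous_of_finiteDimensional
  have hNcont : Continuous N := by
    have : Continuous fun x : E => ‖φ x‖ := continuous_norm.comp hφ
    exact this
  let L : NormSyn E →L[ℂ] E := ⟨ψ, hψ⟩
  have hbound : ∀ x : E, N x ≤ 1 → ‖x‖ ≤ ‖L‖ := by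
    intro x hx
    have h1 : ‖L (φ x)‖ ≤ ‖L‖ * ‖φ x‖ := L.le_opNorm _
    have h2 : ‖(φ x : NormSyn E)‖ = N x := rfl
    have h3 : (L (φ x) : E) = x := rfl
    rw [h3, h2] at h1
    calc ‖x‖ ≤ ‖L‖ * N x := h1
      _ ≤ ‖L‖ * 1 := by
          have : (0:ℝ) ≤ N x := by
            have := norm_nonneg (φ x)
            rwa [h2] at this
          exact mul_le_mul_of_nonneg_left hx (norm_nonneg L)
      _ = ‖L‖ := mul_one _
  have hclosed : IsClosed {x : E | N x ≤ 1} := isClosed_le hNcont continuous_const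
  have hcpt : IsCompact {x : E | N x ≤ 1} := by
    refine (isCompact_closedBall (0:E) ‖L‖).of_isClosed_subset hclosed ?_
    intro x hx
    simpa [Metric.mem_closedBall, dist_eq_norm] using hbound x hx
  have h0 : (0:E) ∈ {x : E | N x ≤ 1} := by simp [hN0]
  obtain ⟨z, hz, hzmax⟩ := hcpt.exists_isMaxOn ⟨0, h0⟩ hf.continuousOn
  refine ⟨z, hz, fun w hw => hzmax hw, ?_⟩
  exact IsGreatest.csSup_eq ⟨⟨z, hz, rfl⟩, by rintro y ⟨w, hw, rfl⟩; exact hzmax hw⟩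

lemma key_ineq (k1 k2 : ℕ) {a1 a2 r1 r2 : ℝ} (ha1 : 0 < a1) (ha2 : 0 < a2)
    (hr1 : 0 ≤ r1) (hr2 : 0 ≤ r2) (h : a1 * r1 + a2 * r2 ≤ 1) :
    r1 ^ k1 * r2 ^ k2 ≤
      (k1 : ℝ) ^ k1 * (k2 : ℝ) ^ k2 / (((k1 + k2 : ℕ) : ℝ) ^ (k1 + k2) * a1 ^ k1 * a2 ^ k2) := by
  have hkk : ∀ m : ℕ, ((m : ℝ)) ^ m ≠ 0 := by
    intro m
    rcases Nat.eq_zero_or_pos m with hm | hm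
    · subst hm; norm_num
    · positivity
  rcases Nat.eq_zero_or_pos k1 with hk1 | hk1
  · subst hk1
    have hr2' : r2 ≤ 1 / a2 := by
      rw [le_div_iff₀ ha2]; nlinarith
    have : r2 ^ k2 ≤ (1 / a2) ^ k2 := pow_le_pow_left₀ hr2 hr2' k2
    simp only [pow_zero, one_mul, zero_add, Nat.cast_zero, mul_one] at *
    calc r2 ^ k2 ≤ (1 / a2) ^ k2 := this
      _ = (k2:ℝ) ^ k2 / ((k2:ℝ) ^ k2 * a2 ^ k2) := by
          rw [div_pow, one_pow]
          rw [eq_div_iff (mul_ne_zero (hkk k2) (by positivity))]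
          field_simp
  · rcases Nat.eq_zero_or_pos k2 with hk2 | hk2
    · subst hk2
      have hr1' : r1 ≤ 1 / a1 := by
        rw [le_div_iff₀ ha1]; nlinarith
      have : r1 ^ k1 ≤ (1 / a1) ^ k1 := pow_le_pow_left₀ hr1 hr1' k1
      simp only [pow_zero, one_mul, add_zero, Nat.cast_zero, mul_one] at *
      calc r1 ^ k1 ≤ (1 / a1) ^ k1 := this
        _ = (k1:ℝ) ^ k1 / ((k1:ℝ) ^ k1 * a1 ^ k1) := by
            rw [div_pow, one_pow]
            rw [eq_div_iff (mul_ne_zero (hkk k1) (by positivity))]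
            field_simp
    · set k : ℕ := k1 + k2 with hk
      have hkpos : 0 < (k:ℝ) := by positivity
      have hk1R : 0 < (k1:ℝ) := by exact_mod_cast hk1
      have hk2R : 0 < (k2:ℝ) := by exact_mod_cast hk2
      set s1 : ℝ := a1 * r1 with hs1
      set s2 : ℝ := a2 * r2 with hs2
      have hs1n : 0 ≤ s1 := by positivity
      have hs2n : 0 ≤ s2 := by positivity
      set w1 : ℝ := (k1:ℝ) / k with hw1
      set w2 : ℝ := (k2:ℝ) / k with hw2
      set u1 : ℝ := s1 * k / k1 with hu1
      set u2 : ℝ := s2 * k / k2 with hu2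
      have hu1n : 0 ≤ u1 := by positivity
      have hu2n : 0 ≤ u2 := by positivity
      have hwsum : w1 + w2 = 1 := by
        rw [hw1, hw2, ← add_div, hk]
        push_cast
        field_simp
      have hgm : u1 ^ w1 * u2 ^ w2 ≤ w1 * u1 + w2 * u2 :=
        Real.geom_mean_le_arith_mean2_weighted (by positivity) (by positivity) hu1n hu2n hwsum
      have harith : w1 * u1 + w2 * u2 = s1 + s2 := by
        rw [hw1, hw2, hu1, hu2]
        field_simp
      have hgm1 : u1 ^ w1 * u2 ^ w2 ≤ 1 := by
        rw [harith] at hgm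
        linarith
      have hpow : (u1 ^ w1 * u2 ^ w2) ^ (k:ℕ) ≤ 1 := by
        calc (u1 ^ w1 * u2 ^ w2) ^ (k:ℕ) ≤ 1 ^ (k:ℕ) :=
              pow_le_pow_left₀ (by positivity) hgm1 k
          _ = 1 := one_pow k
      have hexpand : (u1 ^ w1 * u2 ^ w2) ^ (k:ℕ) = u1 ^ k1 * u2 ^ k2 := by
        rw [mul_pow, ← Real.rpow_natCast (u1 ^ w1) k, ← Real.rpow_natCast (u2 ^ w2) k,
          ← Real.rpow_mul hu1n, ← Real.rpow_mul hu2n]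
        have e1 : w1 * (k:ℝ) = (k1:ℕ) := by rw [hw1]; field_simp
        have e2 : w2 * (k:ℝ) = (k2:ℕ) := by rw [hw2]; field_simp
        rw [e1, e2, Real.rpow_natCast, Real.rpow_natCast]
      rw [hexpand] at hpow
      have hu1e : u1 ^ k1 = s1 ^ k1 * (k:ℝ) ^ k1 / (k1:ℝ) ^ k1 := by
        rw [hu1, div_pow, mul_pow]
      have hu2e : u2 ^ k2 = s2 ^ k2 * (k:ℝ) ^ k2 / (k2:ℝ) ^ k2 := by
        rw [hu2, div_pow, mul_pow]
      have hmain : s1 ^ k1 * s2 ^ k2 * (k:ℝ) ^ k ≤ (k1:ℝ) ^ k1 * (k2:ℝ) ^ k2 := by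
        rw [hu1e, hu2e, div_mul_div_comm, div_le_one (by positivity)] at hpow
        calc s1 ^ k1 * s2 ^ k2 * (k:ℝ) ^ k
            = s1 ^ k1 * (k:ℝ) ^ k1 * (s2 ^ k2 * (k:ℝ) ^ k2) := by
              rw [hk, pow_add]; ring
          _ ≤ (k1:ℝ) ^ k1 * (k2:ℝ) ^ k2 := hpow
      rw [le_div_iff₀ (by positivity)]
      calc r1 ^ k1 * r2 ^ k2 * (((k1 + k2:ℕ):ℝ) ^ (k1 + k2) * a1 ^ k1 * a2 ^ k2)
          = s1 ^ k1 * s2 ^ k2 * (k:ℝ) ^ k := by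
            rw [hs1, hs2, mul_pow, mul_pow, hk]; ring
        _ ≤ (k1:ℝ) ^ k1 * (k2:ℝ) ^ k2 := hmain

lemma abs_prod_smul {n : ℕ} {t : ℝ} (ht : 0 ≤ t) (z : Fin n → ℂ) (α : Fin n → ℕ) :
    ‖∏ i, ((t:ℂ) • z) i ^ α i‖ =
      t ^ (∑ i, α i) * ‖∏ i, z i ^ α i‖ := by
  have h : ∀ i ∈ Finset.univ, ((t:ℂ) • z) i ^ α i = (t:ℂ) ^ α i * z i ^ α i := by
    intro i _; rw [Pi.smul_apply, smul_eq_mul, mul_pow]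
  rw [Finset.prod_congr rfl h, Finset.prod_mul_distrib, Finset.prod_pow_eq_pow_sum,
    norm_mul, norm_pow, Complex.norm_real, Real.norm_eq_abs, abs_of_nonneg ht]

lemma mono_bound {n : ℕ} (N : (Fin n → ℂ) → ℝ)
    (hadd : ∀ x y, N (x + y) ≤ N x + N y)
    (hsmul : ∀ (c : ℂ) (x), N (c • x) = ‖c‖ * N x)
    (hdef : ∀ x, N x = 0 → x = 0)
    (α : Fin n → ℕ) (z : Fin n → ℂ) (hz : N z ≤ 1)
    (hzmax : ∀ w, N w ≤ 1 → ‖∏ i, w i ^ α i‖ ≤ ‖∏ i, z i ^ α i‖)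
    (w : Fin n → ℂ) :
    ‖∏ i, w i ^ α i‖ ≤ N w ^ (∑ i, α i) * ‖∏ i, z i ^ α i‖ := by
  rcases eq_or_lt_of_le (N_nonneg' N hadd hsmul w) with h0 | hpos
  · have hw0 : w = 0 := hdef w h0.symm
    by_cases hk : ∑ i, α i = 0
    · have hall : ∀ i, α i = 0 := fun i =>
        (Finset.sum_eq_zero_iff.mp hk) i (Finset.mem_univ i)
      have h1 : ‖∏ i, w i ^ α i‖ = 1 := by simp [hall]
      have h2 : ‖∏ i, z i ^ α i‖ = 1 := by simp [hall]
      rw [h1, h2, hk, pow_zero, mul_one]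
    · have : ∃ i, α i ≠ 0 := by
        by_contra hc
        push_neg at hc
        exact hk (Finset.sum_eq_zero fun i _ => hc i)
      obtain ⟨i, hi⟩ := this
      have hprod : (∏ j, w j ^ α j) = 0 :=
        Finset.prod_eq_zero (Finset.mem_univ i) (by simp [hw0, zero_pow hi])
      rw [hprod, norm_zero]
      have : N w = 0 := h0.symm
      rw [this, zero_pow hk, zero_mul]
  · set r : ℝ := N w with hr
    set u : Fin n → ℂ := ((r⁻¹ : ℝ) : ℂ) • w with hu
    have hNu : N u = 1 := by
      rw [hu, hsmul, Complex.norm_real, Real.norm_eq_abs, abs_of_pos (inv_pos.2 hpos), ← hr,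
        inv_mul_cancel₀ (ne_of_gt hpos)]
    have h1 : ‖∏ i, u i ^ α i‖ ≤ ‖∏ i, z i ^ α i‖ :=
      hzmax u (le_of_eq hNu)
    have huw : ((r : ℝ) : ℂ) • u = w := by
      rw [hu, smul_smul]
      norm_cast
      rw [mul_inv_cancel₀ (ne_of_gt hpos), one_smul]
    have habs := abs_prod_smul (le_of_lt hpos) u α
    rw [huw] at habs
    rw [habs]
    exact mul_le_mul_of_nonneg_left h1 (by positivity)

/-- `δ_N(α) = sup {|z^α| : N z ≤ 1}` on `ℂ^n`. -/
noncomputable def deltaN {n : ℕ} (N : (Fin n → ℂ) → ℝ) (α : Fin n → ℕ) : ℝ :=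
  sSup ((fun z => ‖∏ i, z i ^ α i‖) '' {z | N z ≤ 1})

/-- `δ` for the combined monomial with respect to the norm `a₁N₁ + a₂N₂` on the product space. -/
noncomputable def deltaProd {n1 n2 : ℕ} (N : ((Fin n1 → ℂ) × (Fin n2 → ℂ)) → ℝ)
    (α1 : Fin n1 → ℕ) (α2 : Fin n2 → ℕ) : ℝ :=
  sSup ((fun p : (Fin n1 → ℂ) × (Fin n2 → ℂ) =>
    ‖(∏ i, p.1 i ^ α1 i) * ∏ j, p.2 j ^ α2 j‖) '' {p | N p ≤ 1})

/-- Computation of `δ_N(α)` for the norm `N(z¹,z²) = a₁N₁(z¹) + a₂N₂(z²)`. -/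
theorem stmt3 {n1 n2 : ℕ} (N1 : (Fin n1 → ℂ) → ℝ) (N2 : (Fin n2 → ℂ) → ℝ)
    (hN1_add : ∀ x y, N1 (x + y) ≤ N1 x + N1 y)
    (hN1_smul : ∀ (c : ℂ) (x), N1 (c • x) = ‖c‖ * N1 x)
    (hN1_def : ∀ x, N1 x = 0 → x = 0)
    (hN2_add : ∀ x y, N2 (x + y) ≤ N2 x + N2 y)
    (hN2_smul : ∀ (c : ℂ) (x), N2 (c • x) = ‖c‖ * N2 x)
    (hN2_def : ∀ x, N2 x = 0 → x = 0)
    (a1 a2 : ℝ) (ha1 : 0 < a1) (ha2 : 0 < a2)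
    (α1 : Fin n1 → ℕ) (α2 : Fin n2 → ℕ) :
    deltaProd (fun p => a1 * N1 p.1 + a2 * N2 p.2) α1 α2 =
      ((∑ i, α1 i : ℕ) : ℝ) ^ (∑ i, α1 i) * ((∑ j, α2 j : ℕ) : ℝ) ^ (∑ j, α2 j) /
          (((∑ i, α1 i) + ∑ j, α2 j : ℕ) : ℝ) ^ ((∑ i, α1 i) + ∑ j, α2 j) *
        (deltaN N1 α1 * deltaN N2 α2 / (a1 ^ (∑ i, α1 i) * a2 ^ (∑ j, α2 j))) := by
  obtain ⟨z1, hz1, hz1max, hz1sup⟩ := sup_attained N1 hN1_add hN1_smul hN1_def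
    (fun z => ‖∏ i, z i ^ α1 i‖)
    (continuous_norm.comp (continuous_finset_prod _ fun i _ =>
      (continuous_apply i).pow _))
  obtain ⟨z2, hz2, hz2max, hz2sup⟩ := sup_attained N2 hN2_add hN2_smul hN2_def
    (fun z => ‖∏ j, z j ^ α2 j‖)
    (continuous_norm.comp (continuous_finset_prod _ fun j _ =>
      (continuous_apply j).pow _))
  set NP : ((Fin n1 → ℂ) × (Fin n2 → ℂ)) → ℝ := fun p => a1 * N1 p.1 + a2 * N2 p.2 with hNP
  have hNPadd : ∀ x y, NP (x + y) ≤ NP x + NP y := by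
    intro x y
    have h1 := hN1_add x.1 y.1
    have h2 := hN2_add x.2 y.2
    have e1 : a1 * N1 (x.1 + y.1) ≤ a1 * (N1 x.1 + N1 y.1) :=
      mul_le_mul_of_nonneg_left h1 ha1.le
    have e2 : a2 * N2 (x.2 + y.2) ≤ a2 * (N2 x.2 + N2 y.2) :=
      mul_le_mul_of_nonneg_left h2 ha2.le
    show a1 * N1 (x.1 + y.1) + a2 * N2 (x.2 + y.2) ≤ _
    simp only [hNP]
    nlinarith
  have hNPsmul : ∀ (c : ℂ) (x), NP (c • x) = ‖c‖ * NP x := by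
    intro c x
    show a1 * N1 (c • x.1) + a2 * N2 (c • x.2) = _
    rw [hN1_smul, hN2_smul]
    simp only [hNP]
    ring
  have hNPdef : ∀ x, NP x = 0 → x = 0 := by
    intro x hx
    have h1 := N_nonneg' N1 hN1_add hN1_smul x.1
    have h2 := N_nonneg' N2 hN2_add hN2_smul x.2
    simp only [hNP] at hx
    have e1 : N1 x.1 = 0 := by nlinarith
    have e2 : N2 x.2 = 0 := by nlinarith
    exact Prod.ext (hN1_def _ e1) (hN2_def _ e2)
  obtain ⟨p, hp, hpmax, hpsup⟩ := sup_attained NP hNPadd hNPsmul hNPdef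
    (fun p : (Fin n1 → ℂ) × (Fin n2 → ℂ) =>
      ‖(∏ i, p.1 i ^ α1 i) * ∏ j, p.2 j ^ α2 j‖)
    (continuous_norm.comp (Continuous.mul
      (continuous_finset_prod _ fun i _ => ((continuous_apply i).comp continuous_fst).pow _)
      (continuous_finset_prod _ fun j _ => ((continuous_apply j).comp continuous_snd).pow _)))
  set d1 : ℝ := ‖∏ i, z1 i ^ α1 i‖ with hd1
  set d2 : ℝ := ‖∏ j, z2 j ^ α2 j‖ with hd2
  have hd1n : 0 ≤ d1 := norm_nonneg _
  have hd2n : 0 ≤ d2 := norm_nonneg _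
  have e1 : deltaN N1 α1 = d1 := hz1sup
  have e2 : deltaN N2 α2 = d2 := hz2sup
  have ep : deltaProd NP α1 α2 =
      ‖(∏ i, p.1 i ^ α1 i) * ∏ j, p.2 j ^ α2 j‖ := hpsup
  rw [e1, e2, ep]
  set D : ℝ := ‖(∏ i, p.1 i ^ α1 i) * ∏ j, p.2 j ^ α2 j‖ with hD
  set Mval : ℝ := ((∑ i, α1 i : ℕ) : ℝ) ^ (∑ i, α1 i) * ((∑ j, α2 j : ℕ) : ℝ) ^ (∑ j, α2 j) /
      ((((∑ i, α1 i) + ∑ j, α2 j : ℕ) : ℝ) ^ ((∑ i, α1 i) + ∑ j, α2 j)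
        * a1 ^ (∑ i, α1 i) * a2 ^ (∑ j, α2 j)) with hM
  have hupper : D ≤ Mval * (d1 * d2) := by
    have hsplit : D = ‖∏ i, p.1 i ^ α1 i‖ * ‖∏ j, p.2 j ^ α2 j‖ := by
      rw [hD, norm_mul]
    have hb1 := mono_bound N1 hN1_add hN1_smul hN1_def α1 z1 hz1 hz1max p.1
    have hb2 := mono_bound N2 hN2_add hN2_smul hN2_def α2 z2 hz2 hz2max p.2
    have hr1n := N_nonneg' N1 hN1_add hN1_smul p.1
    have hr2n := N_nonneg' N2 hN2_add hN2_smul p.2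
    have hpball : a1 * N1 p.1 + a2 * N2 p.2 ≤ 1 := hp
    have hkey := key_ineq (∑ i, α1 i) (∑ j, α2 j) ha1 ha2 hr1n hr2n hpball
    calc D = ‖∏ i, p.1 i ^ α1 i‖ * ‖∏ j, p.2 j ^ α2 j‖ := hsplit
      _ ≤ (N1 p.1 ^ (∑ i, α1 i) * d1) * (N2 p.2 ^ (∑ j, α2 j) * d2) := by
          apply mul_le_mul hb1 hb2 (norm_nonneg _)
          positivity
      _ = (N1 p.1 ^ (∑ i, α1 i) * N2 p.2 ^ (∑ j, α2 j)) * (d1 * d2) := by ring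
      _ ≤ Mval * (d1 * d2) := by
          apply mul_le_mul_of_nonneg_right _ (by positivity)
          rw [hM]
          exact hkey
  have hlower : Mval * (d1 * d2) ≤ D := by
    by_cases hk : (∑ i, α1 i) + (∑ j, α2 j) = 0
    · have hk1 : ∑ i, α1 i = 0 := Nat.eq_zero_of_add_eq_zero_right hk
      have hk2 : ∑ j, α2 j = 0 := Nat.eq_zero_of_add_eq_zero_left hk
      have hall1 : ∀ i, α1 i = 0 := fun i =>
        (Finset.sum_eq_zero_iff.mp hk1) i (Finset.mem_univ i)
      have hall2 : ∀ j, α2 j = 0 := fun j =>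
        (Finset.sum_eq_zero_iff.mp hk2) j (Finset.mem_univ j)
      have hMv : Mval = 1 := by
        rw [hM, hk1, hk2]; norm_num
      have hDv : D = 1 := by
        rw [hD]; simp [hall1, hall2]
      have hd1v : d1 = 1 := by rw [hd1]; simp [hall1]
      have hd2v : d2 = 1 := by rw [hd2]; simp [hall2]
      rw [hMv, hDv, hd1v, hd2v]; norm_num
    · set k1 : ℕ := ∑ i, α1 i with hk1d
      set k2 : ℕ := ∑ j, α2 j with hk2d
      have hkpos : 0 < ((k1 + k2 : ℕ) : ℝ) := by
        have : 0 < k1 + k2 := Nat.pos_of_ne_zero hk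
        exact_mod_cast this
      set t1 : ℝ := (k1 : ℝ) / (a1 * ((k1 + k2 : ℕ) : ℝ)) with ht1
      set t2 : ℝ := (k2 : ℝ) / (a2 * ((k1 + k2 : ℕ) : ℝ)) with ht2
      have ht1n : 0 ≤ t1 := by positivity
      have ht2n : 0 ≤ t2 := by positivity
      set q : (Fin n1 → ℂ) × (Fin n2 → ℂ) :=
        (((t1 : ℝ) : ℂ) • z1, ((t2 : ℝ) : ℂ) • z2) with hq
      have hq1 : N1 q.1 = t1 * N1 z1 := by
        rw [hq, hN1_smul, Complex.norm_real, Real.norm_eq_abs, abs_of_nonneg ht1n]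
      have hq2 : N2 q.2 = t2 * N2 z2 := by
        rw [hq, hN2_smul, Complex.norm_real, Real.norm_eq_abs, abs_of_nonneg ht2n]
      have hqball : NP q ≤ 1 := by
        simp only [hNP]
        rw [hq1, hq2]
        have hb1 : a1 * (t1 * N1 z1) ≤ a1 * t1 := by
          nlinarith [mul_le_mul_of_nonneg_left hz1 (mul_nonneg ha1.le ht1n)]
        have hb2 : a2 * (t2 * N2 z2) ≤ a2 * t2 := by
          nlinarith [mul_le_mul_of_nonneg_left hz2 (mul_nonneg ha2.le ht2n)]
        have eA : a1 * t1 = (k1 : ℝ) / ((k1 + k2 : ℕ) : ℝ) := by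
          rw [ht1, ← mul_div_assoc, mul_div_mul_left _ _ (ne_of_gt ha1)]
        have eB : a2 * t2 = (k2 : ℝ) / ((k1 + k2 : ℕ) : ℝ) := by
          rw [ht2, ← mul_div_assoc, mul_div_mul_left _ _ (ne_of_gt ha2)]
        have hsum : a1 * t1 + a2 * t2 = 1 := by
          rw [eA, eB, ← add_div]
          have ecast : (k1 : ℝ) + (k2 : ℝ) = ((k1 + k2 : ℕ) : ℝ) := by push_cast; ring
          rw [ecast, div_self (ne_of_gt hkpos)]
        linarith
      have hle : ‖(∏ i, q.1 i ^ α1 i) * ∏ j, q.2 j ^ α2 j‖ ≤ D :=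
        hpmax q hqball
      have hfq : ‖(∏ i, q.1 i ^ α1 i) * ∏ j, q.2 j ^ α2 j‖ =
          (t1 ^ k1 * t2 ^ k2) * (d1 * d2) := by
        rw [norm_mul]
        have hA : ‖∏ i, q.1 i ^ α1 i‖ = t1 ^ k1 * d1 := by
          rw [hq]; exact abs_prod_smul ht1n z1 α1
        have hB : ‖∏ j, q.2 j ^ α2 j‖ = t2 ^ k2 * d2 := by
          rw [hq]; exact abs_prod_smul ht2n z2 α2
        rw [hA, hB]; ring
      have hMt : t1 ^ k1 * t2 ^ k2 = Mval := by
        rw [ht1, ht2, hM, div_pow, div_pow, div_mul_div_comm]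
        congr 1
        rw [mul_pow, mul_pow, pow_add]
        ring
      rw [hfq, hMt] at hle
      exact hle
  have hfinal : D = Mval * (d1 * d2) := le_antisymm hupper hlower
  rw [hfinal, hM]
  ring
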